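/- arXiv:1307.2302 — 2 statements merged into one kernel-verified Lean document; each statement's English description precedes it below -/
import Mathlib

section
/- In a graph with maximum degree at most M, changing all edges incident to a single vertex changes the number of connected triples (2-stars) by at most 3·C(M,2) ≤ (3/2)M². -/
open Finset

private lemma two_mul_choose_two (M : ℕ) : 2 * M.choose 2 = M * (M - 1) := by
  rcases M with _ | m
  · simp
  · rw [Nat.choose_two_right]
    have h2 : 2 ∣ (m + 1) * m := by
      have := Nat.even_mul_succ_self m
      rw [Nat.even_iff, Nat.mul_comm] at this
      omega
    simp only [Nat.succ_sub_one]
    exact Nat.mul_div_cancel' h2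

private lemma touch_bound (n M : ℕ) (A : Fin n → Fin n → Bool)
    (hsym : ∀ i j, A i j = A j i) (hdiag : ∀ i, A i i = false) (v : Fin n)
    (hdeg : ∀ i, (Finset.univ.filter fun j => A i j = true).card ≤ M) :
    (Finset.univ.filter fun x : Fin n × Fin n × Fin n =>
        (x.2.1 < x.2.2 ∧ x.2.1 ≠ x.1 ∧ x.2.2 ≠ x.1 ∧ A x.1 x.2.1 = true ∧ A x.1 x.2.2 = true)
        ∧ (x.1 = v ∨ x.2.1 = v ∨ x.2.2 = v)).card ≤ 3 * M.choose 2 := by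
  classical
  set N : Fin n → Finset (Fin n) := fun i => Finset.univ.filter fun j => A i j = true with hN
  set V : Finset (Fin n × Fin n × Fin n) := Finset.univ.filter fun x : Fin n × Fin n × Fin n =>
      (x.2.1 < x.2.2 ∧ x.2.1 ≠ x.1 ∧ x.2.2 ≠ x.1 ∧ A x.1 x.2.1 = true ∧ A x.1 x.2.2 = true)
      ∧ (x.1 = v ∨ x.2.1 = v ∨ x.2.2 = v) with hV
  have hsplit : (V.filter fun x => x.1 = v).card + (V.filter fun x => ¬ x.1 = v).card = V.card :=
    Finset.card_filter_add_card_filter_not _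
  have h1 : (V.filter fun x => x.1 = v).card ≤ M.choose 2 := by
    have hle : (V.filter fun x => x.1 = v).card ≤ ((N v).powersetCard 2).card := by
      apply Finset.card_le_card_of_injOn (fun x => ({x.2.1, x.2.2} : Finset (Fin n)))
      · intro x hx
        rw [Finset.mem_coe] at hx ⊢
        simp only [hV, Finset.mem_filter, Finset.mem_univ, true_and] at hx
        obtain ⟨⟨⟨hlt, _, _, hb, hc⟩, _⟩, hxv⟩ := hx
        rw [Finset.mem_powersetCard]
        constructor
        · intro y hy
          simp only [Finset.mem_insert, Finset.mem_singleton] at hy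
          simp only [hN, Finset.mem_filter, Finset.mem_univ, true_and]
          rcases hy with rfl | rfl
          · rw [← hxv]; exact hb
          · rw [← hxv]; exact hc
        · rw [Finset.card_insert_of_notMem (by simp [ne_of_lt hlt]), Finset.card_singleton]
      · intro x hx y hy hxy
        have hxy' : ({x.2.1, x.2.2} : Finset (Fin n)) = {y.2.1, y.2.2} := hxy
        simp only [hV, Finset.mem_coe, Finset.mem_filter, Finset.mem_univ, true_and] at hx hy
        obtain ⟨⟨⟨hltx, _, _, _, _⟩, _⟩, hxv⟩ := hx
        obtain ⟨⟨⟨hlty, _, _, _, _⟩, _⟩, hyv⟩ := hy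
        have h1 : x.2.1 = y.2.1 ∨ x.2.1 = y.2.2 := by
          have : x.2.1 ∈ ({y.2.1, y.2.2} : Finset (Fin n)) := by rw [← hxy']; simp
          simpa using this
        have h2 : x.2.2 = y.2.1 ∨ x.2.2 = y.2.2 := by
          have : x.2.2 ∈ ({y.2.1, y.2.2} : Finset (Fin n)) := by rw [← hxy']; simp
          simpa using this
        have h3 : y.2.1 = x.2.1 ∨ y.2.1 = x.2.2 := by
          have : y.2.1 ∈ ({x.2.1, x.2.2} : Finset (Fin n)) := by rw [hxy']; simp
          simpa using this
        have hb : x.2.1 = y.2.1 := by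
          rcases h1 with h | h
          · exact h
          · rcases h3 with h' | h'
            · exact h'.symm
            · exfalso
              rw [h] at hltx
              rw [h'] at hlty
              exact lt_irrefl _ (hltx.trans hlty)
        have hc : x.2.2 = y.2.2 := by
          rcases h2 with h | h
          · exfalso
            have heq : x.2.1 = x.2.2 := hb.trans h.symm
            rw [heq] at hltx
            exact lt_irrefl _ hltx
          · exact h
        have : x.2 = y.2 := Prod.ext hb hc
        exact Prod.ext (hxv.trans hyv.symm) this
    refine hle.trans ?_
    rw [Finset.card_powersetCard]
    exact Nat.choose_le_choose 2 (hdeg v)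
  have h2 : (V.filter fun x => ¬ x.1 = v).card ≤ M * (M - 1) := by
    set T : Finset (Fin n × Fin n) :=
      (N v).biUnion (fun a => ((N a).erase v).image (fun c => (a, c))) with hT
    have hle : (V.filter fun x => ¬ x.1 = v).card ≤ T.card := by
      apply Finset.card_le_card_of_injOn
        (fun x => (x.1, if x.2.1 = v then x.2.2 else x.2.1))
      · intro x hx
        rw [Finset.mem_coe] at hx ⊢
        simp only [hV, Finset.mem_filter, Finset.mem_univ, true_and] at hx
        obtain ⟨⟨⟨hlt, hba, hca, hb, hc⟩, htouch⟩, hav⟩ := hx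
        have hane : A v x.1 = true ∧ (x.1 = v → False) := by
          constructor
          · rcases htouch with h | h | h
            · exact absurd h hav
            · rw [hsym]; rw [← h]; exact hb
            · rw [hsym]; rw [← h]; exact hc
          · exact hav
        rcases htouch with h | h | h
        · exact absurd h hav
        · -- x.2.1 = v
          simp only [hT, Finset.mem_biUnion]
          refine ⟨x.1, by simp [hN, hane.1], ?_⟩
          rw [if_pos h]
          apply Finset.mem_image_of_mem
          rw [Finset.mem_erase]
          refine ⟨?_, by simp [hN, hc]⟩
          intro hcv; rw [h, hcv] at hlt; exact lt_irrefl _ hlt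
        · -- x.2.2 = v
          have hb1v : x.2.1 ≠ v := by intro hbv; rw [hbv, h] at hlt; exact lt_irrefl _ hlt
          simp only [hT, Finset.mem_biUnion]
          refine ⟨x.1, by simp [hN, hane.1], ?_⟩
          rw [if_neg hb1v]
          apply Finset.mem_image_of_mem
          rw [Finset.mem_erase]
          exact ⟨hb1v, by simp [hN, hb]⟩
      · intro x hx y hy hxy
        simp only [hV, Finset.mem_coe, Finset.mem_filter, Finset.mem_univ, true_and] at hx hy
        obtain ⟨⟨⟨hltx, _, _, _, _⟩, htx⟩, hxv⟩ := hx
        obtain ⟨⟨⟨hlty, _, _, _, _⟩, hty⟩, hyv⟩ := hy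
        simp only [Prod.mk.injEq] at hxy
        have ha : x.1 = y.1 := hxy.1
        have hsnd := hxy.2
        have htx' : x.2.1 = v ∨ x.2.2 = v := by tauto
        have hty' : y.2.1 = v ∨ y.2.2 = v := by tauto
        rcases htx' with hxb | hxc <;> rcases hty' with hyb | hyc
        · rw [if_pos hxb, if_pos hyb] at hsnd
          exact Prod.ext ha (Prod.ext (hxb.trans hyb.symm) hsnd)
        · have hyb : y.2.1 ≠ v := by intro h; rw [h, hyc] at hlty; exact lt_irrefl _ hlty
          rw [if_pos hxb, if_neg hyb] at hsnd
          -- x.2.2 = y.2.1, but v = x.2.1 < x.2.2 = y.2.1 < y.2.2 = v, contradiction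
          exfalso
          rw [hsnd] at hltx
          rw [hxb] at hltx
          rw [hyc] at hlty
          exact lt_irrefl v (hltx.trans hlty)
        · have hxb : x.2.1 ≠ v := by intro h; rw [h, hxc] at hltx; exact lt_irrefl _ hltx
          rw [if_neg hxb, if_pos hyb] at hsnd
          exfalso
          rw [← hsnd] at hlty
          rw [hyb] at hlty
          rw [hxc] at hltx
          exact lt_irrefl v (hlty.trans hltx)
        · have hxb : x.2.1 ≠ v := by intro h; rw [h, hxc] at hltx; exact lt_irrefl _ hltx
          have hyb : y.2.1 ≠ v := by intro h; rw [h, hyc] at hlty; exact lt_irrefl _ hlty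
          rw [if_neg hxb, if_neg hyb] at hsnd
          exact Prod.ext ha (Prod.ext hsnd (hxc.trans hyc.symm))
    refine hle.trans ?_
    calc T.card ≤ ∑ a ∈ N v, (((N a).erase v).image (fun c => (a, c))).card :=
          Finset.card_biUnion_le
      _ ≤ ∑ a ∈ N v, (M - 1) := by
          apply Finset.sum_le_sum
          intro a ha
          refine (Finset.card_image_le).trans ?_
          have hvmem : v ∈ N a := by
            simp only [hN, Finset.mem_filter, Finset.mem_univ, true_and] at ha ⊢
            rw [hsym]; exact ha
          rw [Finset.card_erase_of_mem hvmem]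
          have hNa : (N a).card ≤ M := hdeg a
          omega
      _ = (N v).card * (M - 1) := by rw [Finset.sum_const, smul_eq_mul]
      _ ≤ M * (M - 1) := Nat.mul_le_mul_right _ (hdeg v)
  have hmul := two_mul_choose_two M
  omega

/-- In a graph with maximum degree at most `M`, changing only the edges incident to a single
vertex `v` changes the number of (unordered) connected triples (2-stars) by at most
`3 * C(M,2)`, and `3 * C(M,2) ≤ (3/2) * M²`. -/
theorem two_star_bounded_difference (n : ℕ) (A A' : Fin n → Fin n → Bool)
    (hsymA : ∀ i j, A i j = A j i) (hsymA' : ∀ i j, A' i j = A' j i)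
    (hAdiag : ∀ i, A i i = false) (hA'diag : ∀ i, A' i i = false)
    (v : Fin n) (hagree : ∀ i j, i ≠ v → j ≠ v → A i j = A' i j)
    (M : ℕ)
    (hdegA : ∀ i, (Finset.univ.filter fun j => A i j = true).card ≤ M)
    (hdegA' : ∀ i, (Finset.univ.filter fun j => A' i j = true).card ≤ M) :
    |(((Finset.univ.filter fun x : Fin n × Fin n × Fin n =>
          x.2.1 < x.2.2 ∧ x.2.1 ≠ x.1 ∧ x.2.2 ≠ x.1 ∧
          A x.1 x.2.1 = true ∧ A x.1 x.2.2 = true).card : ℝ)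
        - ((Finset.univ.filter fun x : Fin n × Fin n × Fin n =>
          x.2.1 < x.2.2 ∧ x.2.1 ≠ x.1 ∧ x.2.2 ≠ x.1 ∧
          A' x.1 x.2.1 = true ∧ A' x.1 x.2.2 = true).card : ℝ))|
      ≤ 3 * (M.choose 2 : ℝ) ∧ 3 * (M.choose 2 : ℝ) ≤ (3 / 2) * (M : ℝ) ^ 2 := by
  classical
  set P : (Fin n → Fin n → Bool) → Fin n × Fin n × Fin n → Prop :=
    fun B x => x.2.1 < x.2.2 ∧ x.2.1 ≠ x.1 ∧ x.2.2 ≠ x.1 ∧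
      B x.1 x.2.1 = true ∧ B x.1 x.2.2 = true with hP
  set touch : Fin n × Fin n × Fin n → Prop := fun x => x.1 = v ∨ x.2.1 = v ∨ x.2.2 = v with htch
  have keysplit : ∀ B : Fin n → Fin n → Bool,
      (Finset.univ.filter fun x : Fin n × Fin n × Fin n => P B x).card
        = (Finset.univ.filter fun x => P B x ∧ touch x).card
          + (Finset.univ.filter fun x => P B x ∧ ¬ touch x).card := by
    intro B
    have h := Finset.card_filter_add_card_filter_not
      (s := Finset.univ.filter fun x : Fin n × Fin n × Fin n => P B x) (p := touch)
    rw [Finset.filter_filter, Finset.filter_filter] at h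
    exact h.symm
  have hsame : (Finset.univ.filter fun x : Fin n × Fin n × Fin n => P A x ∧ ¬ touch x)
      = (Finset.univ.filter fun x => P A' x ∧ ¬ touch x) := by
    apply Finset.filter_congr
    intro x _
    simp only [htch, not_or] at *
    constructor
    · rintro ⟨⟨h1, h2, h3, h4, h5⟩, hnt⟩
      obtain ⟨ha, hb, hc⟩ := hnt
      exact ⟨⟨h1, h2, h3, (hagree _ _ ha hb).symm.trans h4,
        (hagree _ _ ha hc).symm.trans h5⟩, ha, hb, hc⟩
    · rintro ⟨⟨h1, h2, h3, h4, h5⟩, hnt⟩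
      obtain ⟨ha, hb, hc⟩ := hnt
      exact ⟨⟨h1, h2, h3, (hagree _ _ ha hb).trans h4,
        (hagree _ _ ha hc).trans h5⟩, ha, hb, hc⟩
  have hb1 : (Finset.univ.filter fun x : Fin n × Fin n × Fin n => P A x ∧ touch x).card
      ≤ 3 * M.choose 2 := touch_bound n M A hsymA hAdiag v hdegA
  have hb2 : (Finset.univ.filter fun x : Fin n × Fin n × Fin n => P A' x ∧ touch x).card
      ≤ 3 * M.choose 2 := touch_bound n M A' hsymA' hA'diag v hdegA'
  have key1 := keysplit A
  have key2 := keysplit A'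
  rw [hsame] at key1
  constructor
  · have e1 : (Finset.univ.filter fun x : Fin n × Fin n × Fin n =>
        x.2.1 < x.2.2 ∧ x.2.1 ≠ x.1 ∧ x.2.2 ≠ x.1 ∧
        A x.1 x.2.1 = true ∧ A x.1 x.2.2 = true)
        = (Finset.univ.filter fun x : Fin n × Fin n × Fin n => P A x) := rfl
    have e2 : (Finset.univ.filter fun x : Fin n × Fin n × Fin n =>
        x.2.1 < x.2.2 ∧ x.2.1 ≠ x.1 ∧ x.2.2 ≠ x.1 ∧
        A' x.1 x.2.1 = true ∧ A' x.1 x.2.2 = true)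
        = (Finset.univ.filter fun x : Fin n × Fin n × Fin n => P A' x) := rfl
    rw [e1, e2, key1, key2]
    rw [abs_sub_le_iff]
    have c1 : ((Finset.univ.filter fun x : Fin n × Fin n × Fin n => P A x ∧ touch x).card : ℝ)
        ≤ 3 * (M.choose 2 : ℝ) := by exact_mod_cast hb1
    have c2 : ((Finset.univ.filter fun x : Fin n × Fin n × Fin n => P A' x ∧ touch x).card : ℝ)
        ≤ 3 * (M.choose 2 : ℝ) := by exact_mod_cast hb2
    have p1 : (0 : ℝ) ≤ ((Finset.univ.filter fun x : Fin n × Fin n × Fin n =>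
        P A x ∧ touch x).card : ℝ) := Nat.cast_nonneg _
    have p2 : (0 : ℝ) ≤ ((Finset.univ.filter fun x : Fin n × Fin n × Fin n =>
        P A' x ∧ touch x).card : ℝ) := Nat.cast_nonneg _
    push_cast
    constructor <;> linarith
  · have hmul := two_mul_choose_two M
    have hle : M * (M - 1) ≤ M * M := Nat.mul_le_mul_left M (Nat.sub_le M 1)
    have h6 : 6 * M.choose 2 ≤ 3 * (M * M) := by omega
    have := (Nat.cast_le (α := ℝ)).mpr h6
    push_cast at this
    nlinarith [this]
end

section
/- Under the local Stochastic Blockmodel, the probability that there exist i ∈ S_*, j ∈ S_*^c with T_ij ≥ 1 (i.e., edge (i,j) lies in a triangle) is at most s·n·(s·p_out² + λ·p_out²), i.e., O(p_out² n s (s+λ)). -/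
open MeasureTheory

def adjOf {N : ℕ} (ω : {e : Fin N × Fin N // e.1 < e.2} → Bool) (i j : Fin N) : Bool :=
  if h : i < j then ω ⟨(i, j), h⟩ else if h' : j < i then ω ⟨(j, i), h'⟩ else false

def edg {N : ℕ} (i j : Fin N) (h : i ≠ j) : {e : Fin N × Fin N // e.1 < e.2} :=
  if hij : i < j then ⟨(i, j), hij⟩ else ⟨(j, i), h.lt_or_gt.resolve_left hij⟩

lemma adj_edg {N : ℕ} (ω : {e : Fin N × Fin N // e.1 < e.2} → Bool) (i j : Fin N) (h : i ≠ j) :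
    adjOf ω i j = ω (edg i j h) := by
  unfold adjOf edg
  rcases h.lt_or_gt with h1 | h1
  · rw [dif_pos h1, dif_pos h1]
  · rw [dif_neg (not_lt_of_gt h1), dif_neg (not_lt_of_gt h1), dif_pos h1]

lemma edg_eq_cases {N : ℕ} {i j k l : Fin N} (h : i ≠ j) (h' : k ≠ l)
    (he : edg i j h = edg k l h') : (i = k ∧ j = l) ∨ (i = l ∧ j = k) := by
  unfold edg at he
  split_ifs at he <;> simp [Subtype.ext_iff, Prod.ext_iff] at he <;> tauto

lemma edg_endpoints {N : ℕ} (i j : Fin N) (h : i ≠ j) :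
    ((edg i j h).1.1 = i ∧ (edg i j h).1.2 = j) ∨ ((edg i j h).1.1 = j ∧ (edg i j h).1.2 = i) := by
  unfold edg; split_ifs <;> simp

lemma edg_comm {N : ℕ} (i j : Fin N) (h : i ≠ j) : edg i j h = edg j i h.symm := by
  unfold edg
  rcases h.lt_or_gt with h1 | h1
  · rw [dif_pos h1, dif_neg (not_lt_of_gt h1)]
  · rw [dif_neg (not_lt_of_gt h1), dif_pos h1]

lemma adj_self {N : ℕ} (ω : {e : Fin N × Fin N // e.1 < e.2} → Bool) (i : Fin N) :
    adjOf ω i i = false := by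
  unfold adjOf; simp

section
variable {ι : Type*} [Fintype ι] [DecidableEq ι] (q : ι → ENNReal) (hq1 : ∀ e, q e ≤ 1)

lemma bern_true (e : ι) :
    (PMF.bernoulli (q e).toNNReal
      (by simpa using ENNReal.toNNReal_mono ENNReal.one_ne_top (hq1 e))).toMeasure {true} = q e := by
  rw [PMF.toMeasure_apply_singleton _ _ (measurableSet_singleton _)]
  exact ENNReal.coe_toNNReal (ne_top_of_le_ne_top ENNReal.one_ne_top (hq1 e))

lemma pi_one (e : ι) :
    (Measure.pi fun e => (PMF.bernoulli (q e).toNNReal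
      (by simpa using ENNReal.toNNReal_mono ENNReal.one_ne_top (hq1 e))).toMeasure)
      {ω : ι → Bool | ω e = true} = q e := by
  have hset : {ω : ι → Bool | ω e = true} =
      Set.pi Set.univ (fun e' => if e' = e then ({true} : Set Bool) else Set.univ) := by
    ext ω
    simp only [Set.mem_setOf_eq, Set.mem_pi, Set.mem_univ, true_implies]
    constructor
    · intro h e'; split_ifs with he
      · subst he; simp [h]
      · trivial
    · intro h; have := h e; simpa using this
  rw [hset, Measure.pi_pi]
  have : ∀ e' : ι, (PMF.bernoulli (q e').toNNReal (by simpa using ENNReal.toNNReal_mono ENNReal.one_ne_top (hq1 e'))).toMeasure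
      (if e' = e then ({true} : Set Bool) else Set.univ) = if e' = e then q e' else 1 := by
    intro e'; split_ifs
    · exact bern_true q hq1 e'
    · exact measure_univ
  rw [Finset.prod_congr rfl (fun e' _ => this e')]
  simp

lemma pi_two (e1 e2 : ι) (hne : e1 ≠ e2) :
    (Measure.pi fun e => (PMF.bernoulli (q e).toNNReal
      (by simpa using ENNReal.toNNReal_mono ENNReal.one_ne_top (hq1 e))).toMeasure)
      {ω : ι → Bool | ω e1 = true ∧ ω e2 = true} = q e1 * q e2 := by
  have hset : {ω : ι → Bool | ω e1 = true ∧ ω e2 = true} =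
      Set.pi Set.univ (fun e' => if e' = e1 ∨ e' = e2 then ({true} : Set Bool) else Set.univ) := by
    ext ω
    simp only [Set.mem_setOf_eq, Set.mem_pi, Set.mem_univ, true_implies]
    constructor
    · rintro ⟨h1, h2⟩ e'; split_ifs with he
      · rcases he with he | he <;> subst he <;> simp [h1, h2]
      · trivial
    · intro h
      have h1 := h e1; have h2 := h e2
      simp at h1 h2; exact ⟨h1, h2⟩
  rw [hset, Measure.pi_pi]
  have key : ∀ e' : ι, (PMF.bernoulli (q e').toNNReal (by simpa using ENNReal.toNNReal_mono ENNReal.one_ne_top (hq1 e'))).toMeasure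
      (if e' = e1 ∨ e' = e2 then ({true} : Set Bool) else Set.univ)
      = if e' ∈ ({e1, e2} : Finset ι) then q e' else 1 := by
    intro e'
    by_cases he : e' = e1 ∨ e' = e2
    · rw [if_pos he, if_pos (by simpa using he)]; exact bern_true q hq1 e'
    · rw [if_neg he, if_neg (by simpa using he)]; exact measure_univ
  rw [Finset.prod_congr rfl (fun e' _ => key e'), Finset.prod_ite_mem, Finset.univ_inter,
    Finset.prod_pair hne]

end

/-- Under the local Stochastic Blockmodel (edges independent, cross-boundary probabilities
at most `p_out`, the adversarial subgraph on `S⋆ᶜ` deterministic with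
`Σ_{i,j ∈ S⋆ᶜ} A_ij ≤ n λ`), the probability that there exist `i ∈ S⋆`, `j ∈ S⋆ᶜ` with
`T_ij ≥ 1` (the edge `(i,j)` lies in a triangle) is at most
`s * n * (s * p_out² + λ * p_out²)`. -/
theorem local_sbm_boundary_cut1 (n s : ℕ) (S : Finset (Fin (n + s))) (hS : S.card = s)
    (pout lam : ENNReal)
    (q : {e : Fin (n + s) × Fin (n + s) // e.1 < e.2} → ENNReal) (hq1 : ∀ e, q e ≤ 1)
    (hcross : ∀ e, ((e.1.1 ∈ S ∧ e.1.2 ∉ S) ∨ (e.1.1 ∉ S ∧ e.1.2 ∈ S)) → q e ≤ pout)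
    (hdet : ∀ e, e.1.1 ∉ S → e.1.2 ∉ S → q e = 0 ∨ q e = 1)
    (hsparse : 2 * ∑ e ∈ Finset.univ.filter
        (fun e : {e : Fin (n + s) × Fin (n + s) // e.1 < e.2} => e.1.1 ∉ S ∧ e.1.2 ∉ S), q e
      ≤ (n : ENNReal) * lam) :
    (Measure.pi fun e => (PMF.bernoulli (q e).toNNReal
      (by simpa using ENNReal.toNNReal_mono ENNReal.one_ne_top (hq1 e))).toMeasure)
      {ω | ∃ i ∈ S, ∃ j ∉ S, 1 ≤ (Finset.univ.filter fun k =>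
          adjOf ω i j = true ∧ adjOf ω i k = true ∧ adjOf ω k j = true).card}
      ≤ (s : ENNReal) * n * ((s : ENNReal) * pout ^ 2 + lam * pout ^ 2) := by
  classical
  set μ := (Measure.pi fun e => (PMF.bernoulli (q e).toNNReal
      (by simpa using ENNReal.toNNReal_mono ENNReal.one_ne_top (hq1 e))).toMeasure) with hμ
  set E : Fin (n + s) → Fin (n + s) → Fin (n + s) →
      Set ({e : Fin (n + s) × Fin (n + s) // e.1 < e.2} → Bool) :=
    fun i j k => {ω | adjOf ω i j = true ∧ adjOf ω i k = true ∧ adjOf ω k j = true} with hE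
  have hqcross : ∀ (i j : Fin (n + s)) (h : i ≠ j), i ∈ S → j ∉ S → q (edg i j h) ≤ pout := by
    intro i j h hi hj
    rcases edg_endpoints i j h with ⟨h1, h2⟩ | ⟨h1, h2⟩
    · exact hcross _ (Or.inl ⟨by rw [h1]; exact hi, by rw [h2]; exact hj⟩)
    · exact hcross _ (Or.inr ⟨by rw [h1]; exact hj, by rw [h2]; exact hi⟩)
  -- step 1 : union bound
  have hsub : {ω | ∃ i ∈ S, ∃ j ∉ S, 1 ≤ (Finset.univ.filter fun k =>
      adjOf ω i j = true ∧ adjOf ω i k = true ∧ adjOf ω k j = true).card}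
      ⊆ ⋃ i ∈ S, ⋃ j ∈ Sᶜ, ⋃ k ∈ (Finset.univ : Finset (Fin (n + s))), E i j k := by
    intro ω hω
    obtain ⟨i, hi, j, hj, hcard⟩ := hω
    obtain ⟨k, hk⟩ := Finset.card_pos.mp hcard
    simp only [Finset.mem_filter, Finset.mem_univ, true_and] at hk
    simp only [Set.mem_iUnion]
    exact ⟨i, hi, j, Finset.mem_compl.mpr hj, k, Finset.mem_univ k, hk⟩
  have hstep1 : μ {ω | ∃ i ∈ S, ∃ j ∉ S, 1 ≤ (Finset.univ.filter fun k =>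
      adjOf ω i j = true ∧ adjOf ω i k = true ∧ adjOf ω k j = true).card}
      ≤ ∑ i ∈ S, ∑ j ∈ Sᶜ, ∑ k, μ (E i j k) := by
    refine (measure_mono hsub).trans ?_
    refine (measure_biUnion_finset_le _ _).trans (Finset.sum_le_sum fun i _ => ?_)
    refine (measure_biUnion_finset_le _ _).trans (Finset.sum_le_sum fun j _ => ?_)
    exact measure_biUnion_finset_le _ _
  set w : Fin (n + s) → Fin (n + s) → ENNReal :=
    fun j k => if h : j = k then 0 else q (edg j k h) with hw
  -- step 2 : bound the inner sum for fixed i ∈ S, j ∉ S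
  have hstep2 : ∀ i ∈ S, ∀ j ∈ Sᶜ, ∑ k, μ (E i j k)
      ≤ (s : ENNReal) * pout ^ 2 + (∑ k ∈ Sᶜ, w j k) * pout ^ 2 := by
    intro i hi j hj
    rw [Finset.mem_compl] at hj
    have hij : i ≠ j := fun h => hj (h ▸ hi)
    rw [← Finset.sum_add_sum_compl S (fun k => μ (E i j k))]
    gcongr
    · -- k ∈ S
      calc ∑ k ∈ S, μ (E i j k) ≤ ∑ _k ∈ S, pout ^ 2 := by
            refine Finset.sum_le_sum fun k hk => ?_
            by_cases hki : k = i
            · have : E i j k = ∅ := by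
                subst hki
                ext ω; simp [hE, adj_self]
              simp [this]
            · have hkj : k ≠ j := fun h => hj (h ▸ hk)
              have hsub2 : E i j k ⊆ {ω | ω (edg i j hij) = true ∧ ω (edg k j hkj) = true} := by
                rintro ω ⟨h1, _, h3⟩
                rw [adj_edg ω i j hij] at h1
                rw [adj_edg ω k j hkj] at h3
                exact ⟨h1, h3⟩
              have hne : edg i j hij ≠ edg k j hkj := by
                intro h
                rcases edg_eq_cases hij hkj h with ⟨h1, _⟩ | ⟨h1, _⟩
                · exact hki h1.symm
                · exact hij h1
              calc μ (E i j k) ≤ μ {ω | ω (edg i j hij) = true ∧ ω (edg k j hkj) = true} :=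
                    measure_mono hsub2
                _ = q (edg i j hij) * q (edg k j hkj) := pi_two q hq1 _ _ hne
                _ ≤ pout * pout := by
                    gcongr
                    · exact hqcross i j hij hi hj
                    · exact hqcross k j hkj hk hj
                _ = pout ^ 2 := (sq pout).symm
        _ = (s : ENNReal) * pout ^ 2 := by rw [Finset.sum_const, hS, nsmul_eq_mul]
    · -- k ∉ S
      rw [Finset.sum_mul]
      refine Finset.sum_le_sum fun k hk => ?_
      rw [Finset.mem_compl] at hk
      by_cases hjk : j = k
      · have : E i j k = ∅ := by
          subst hjk
          ext ω; simp [hE, adj_self]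
        simp [this]
      · have hik : i ≠ k := fun h => hk (h ▸ hi)
        have hwjk : w j k = q (edg j k hjk) := by rw [hw]; exact dif_neg hjk
        rw [hwjk]
        have hj1 : (edg j k hjk).1.1 ∉ S := by
          rcases edg_endpoints j k hjk with ⟨ha, _⟩ | ⟨ha, _⟩
          · rw [ha]; exact hj
          · rw [ha]; exact hk
        have hj2 : (edg j k hjk).1.2 ∉ S := by
          rcases edg_endpoints j k hjk with ⟨_, hb⟩ | ⟨_, hb⟩
          · rw [hb]; exact hk
          · rw [hb]; exact hj
        rcases hdet (edg j k hjk) hj1 hj2 with h0 | h1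
        · calc μ (E i j k) ≤ μ {ω | ω (edg j k hjk) = true} := by
                refine measure_mono ?_
                rintro ω ⟨_, _, h3⟩
                rw [adj_edg ω k j (Ne.symm hjk), ← edg_comm j k hjk] at h3
                exact h3
            _ = q (edg j k hjk) := pi_one q hq1 _
            _ ≤ q (edg j k hjk) * pout ^ 2 := by simp [h0]
        · have hsub2 : E i j k ⊆ {ω | ω (edg i j hij) = true ∧ ω (edg i k hik) = true} := by
            rintro ω ⟨h1', h2, _⟩
            rw [adj_edg ω i j hij] at h1'
            rw [adj_edg ω i k hik] at h2
            exact ⟨h1', h2⟩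
          have hne : edg i j hij ≠ edg i k hik := by
            intro h
            rcases edg_eq_cases hij hik h with ⟨_, h2⟩ | ⟨h1', _⟩
            · exact hjk h2
            · exact hik h1'
          calc μ (E i j k) ≤ μ {ω | ω (edg i j hij) = true ∧ ω (edg i k hik) = true} :=
                measure_mono hsub2
            _ = q (edg i j hij) * q (edg i k hik) := pi_two q hq1 _ _ hne
            _ ≤ pout * pout := by
                gcongr
                · exact hqcross i j hij hi hj
                · exact hqcross i k hik hi hk
            _ = pout ^ 2 := (sq pout).symm
            _ = q (edg j k hjk) * pout ^ 2 := by rw [h1, one_mul]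
  -- step 3 : double sum of w is at most n * lam
  set F : Fin (n + s) × Fin (n + s) → ENNReal :=
    fun p => if h : p.1 < p.2 ∧ p.1 ∉ S ∧ p.2 ∉ S then q ⟨p, h.1⟩ else 0 with hF
  have hFzero : ∀ p : Fin (n + s) × Fin (n + s), (p.1 ∈ S ∨ p.2 ∈ S) → F p = 0 := by
    intro p hp
    rw [hF]
    refine dif_neg ?_
    rintro ⟨_, h1, h2⟩
    tauto
  have hFuniv : ∑ p : Fin (n + s) × Fin (n + s), F p
      = ∑ e ∈ Finset.univ.filter
        (fun e : {e : Fin (n + s) × Fin (n + s) // e.1 < e.2} => e.1.1 ∉ S ∧ e.1.2 ∉ S), q e := by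
    have h1 : ∑ p : Fin (n + s) × Fin (n + s), F p
        = ∑ p ∈ Finset.univ.filter
          (fun p : Fin (n + s) × Fin (n + s) => p.1 < p.2 ∧ p.1 ∉ S ∧ p.2 ∉ S), F p := by
      refine (Finset.sum_subset (Finset.subset_univ _) fun p _ hp => ?_).symm
      simp only [Finset.mem_filter, Finset.mem_univ, true_and] at hp
      rw [hF]; exact dif_neg hp
    rw [h1]
    refine Finset.sum_bij' (i := fun p hp => (⟨p, ?_⟩ : {e : Fin (n + s) × Fin (n + s) // e.1 < e.2}))
      (j := fun e _ => e.1) ?_ ?_ ?_ ?_ ?_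
    · simp only [Finset.mem_filter, Finset.mem_univ, true_and] at hp
      exact hp.1
    · intro p hp
      simp only [Finset.mem_filter, Finset.mem_univ, true_and] at hp ⊢
      exact hp.2
    · intro e he
      simp only [Finset.mem_filter, Finset.mem_univ, true_and] at he ⊢
      exact ⟨e.2, he⟩
    · intro p hp; rfl
    · intro e he; rfl
    · intro p hp
      simp only [Finset.mem_filter, Finset.mem_univ, true_and] at hp
      rw [hF]; exact dif_pos hp
  have hwF : ∀ j ∈ Sᶜ, ∀ k ∈ Sᶜ, w j k = F (j, k) + F (k, j) := by
    intro j hj k hk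
    rw [Finset.mem_compl] at hj hk
    by_cases hjk : j = k
    · subst hjk
      rw [hw, hF]
      simp [lt_irrefl]
    · rcases Ne.lt_or_gt hjk with hlt | hlt
      · rw [hw, hF]
        simp only [dif_neg hjk]
        rw [dif_pos (show (j, k).1 < (j, k).2 ∧ (j, k).1 ∉ S ∧ (j, k).2 ∉ S from ⟨hlt, hj, hk⟩),
          dif_neg (show ¬((k, j).1 < (k, j).2 ∧ (k, j).1 ∉ S ∧ (k, j).2 ∉ S) from
            fun h => absurd h.1 (not_lt_of_gt hlt)), add_zero]
        unfold edg
        rw [dif_pos hlt]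
      · rw [hw, hF]
        simp only [dif_neg hjk]
        rw [dif_neg (show ¬((j, k).1 < (j, k).2 ∧ (j, k).1 ∉ S ∧ (j, k).2 ∉ S) from
            fun h => absurd h.1 (not_lt_of_gt hlt)),
          dif_pos (show (k, j).1 < (k, j).2 ∧ (k, j).1 ∉ S ∧ (k, j).2 ∉ S from ⟨hlt, hk, hj⟩),
          zero_add]
        unfold edg
        rw [dif_neg (not_lt_of_gt hlt)]
  have hA : ∑ p ∈ Sᶜ ×ˢ Sᶜ, F p = ∑ p : Fin (n + s) × Fin (n + s), F p := by
    refine Finset.sum_subset (Finset.subset_univ _) fun p _ hp => ?_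
    simp only [Finset.mem_product, Finset.mem_compl, not_and_or, not_not] at hp
    exact hFzero p hp
  have hD : ∑ j ∈ Sᶜ, ∑ k ∈ Sᶜ, w j k ≤ (n : ENNReal) * lam := by
    have heq : ∑ j ∈ Sᶜ, ∑ k ∈ Sᶜ, w j k
        = 2 * ∑ p : Fin (n + s) × Fin (n + s), F p := by
      rw [Finset.sum_congr rfl fun j hj => Finset.sum_congr rfl fun k hk => hwF j hj k hk]
      have : ∑ j ∈ Sᶜ, ∑ k ∈ Sᶜ, (F (j, k) + F (k, j))
          = (∑ j ∈ Sᶜ, ∑ k ∈ Sᶜ, F (j, k)) + ∑ j ∈ Sᶜ, ∑ k ∈ Sᶜ, F (k, j) := by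
        rw [← Finset.sum_add_distrib]
        exact Finset.sum_congr rfl fun j _ => Finset.sum_add_distrib
      rw [this]
      have h1 : ∑ j ∈ Sᶜ, ∑ k ∈ Sᶜ, F (j, k) = ∑ p ∈ Sᶜ ×ˢ Sᶜ, F p :=
        (Finset.sum_product _ _ _).symm
      have h2 : ∑ j ∈ Sᶜ, ∑ k ∈ Sᶜ, F (k, j) = ∑ p ∈ Sᶜ ×ˢ Sᶜ, F p := by
        rw [Finset.sum_comm]
        exact (Finset.sum_product _ _ _).symm
      rw [h1, h2, hA, two_mul]
    rw [heq, hFuniv]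
    exact hsparse
  -- assemble
  have hcompl : (Sᶜ : Finset (Fin (n + s))).card = n := by
    rw [Finset.card_compl, hS, Fintype.card_fin, Nat.add_sub_cancel]
  calc μ {ω | ∃ i ∈ S, ∃ j ∉ S, 1 ≤ (Finset.univ.filter fun k =>
          adjOf ω i j = true ∧ adjOf ω i k = true ∧ adjOf ω k j = true).card}
      ≤ ∑ i ∈ S, ∑ j ∈ Sᶜ, ∑ k, μ (E i j k) := hstep1
    _ ≤ ∑ i ∈ S, ∑ j ∈ Sᶜ, ((s : ENNReal) * pout ^ 2 + (∑ k ∈ Sᶜ, w j k) * pout ^ 2) :=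
        Finset.sum_le_sum fun i hi => Finset.sum_le_sum fun j hj => hstep2 i hi j hj
    _ = ∑ _i ∈ S, ((Sᶜ.card : ENNReal) * ((s : ENNReal) * pout ^ 2)
          + (∑ j ∈ Sᶜ, ∑ k ∈ Sᶜ, w j k) * pout ^ 2) := by
        refine Finset.sum_congr rfl fun i _ => ?_
        rw [Finset.sum_add_distrib, Finset.sum_const, nsmul_eq_mul, ← Finset.sum_mul]
    _ ≤ ∑ _i ∈ S, ((n : ENNReal) * ((s : ENNReal) * pout ^ 2)
          + ((n : ENNReal) * lam) * pout ^ 2) := by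
        refine Finset.sum_le_sum fun i _ => ?_
        rw [hcompl]
        gcongr
    _ = (s : ENNReal) * ((n : ENNReal) * ((s : ENNReal) * pout ^ 2)
          + ((n : ENNReal) * lam) * pout ^ 2) := by
        rw [Finset.sum_const, hS, nsmul_eq_mul]
    _ = (s : ENNReal) * n * ((s : ENNReal) * pout ^ 2 + lam * pout ^ 2) := by ring
end
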